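/- For every fixed r ≥ 2 there is a constant C_r such that ssat_r(K_k) ≤ C_r · k² for all k; together with the lower bound (r-1)k² - (3r-4)k + (2r-3) ≤ ssat_r(K_k), this gives ssat_r(K_k) = Θ(k²) for fixed r. -/

import Mathlib

/-- `S` is monochromatic of color `i` under the edge-coloring `c`. -/
def IsMonoOn {n r : ℕ} (c : Sym2 (Fin n) → Fin r) (i : Fin r) (S : Finset (Fin n)) : Prop :=
  ∀ x ∈ S, ∀ y ∈ S, x ≠ y → c s(x, y) = i

/-- `c'` extends the edge-coloring `c` by one new vertex. -/
def ColExtends {n r : ℕ} (c : Sym2 (Fin n) → Fin r) (c' : Sym2 (Fin (n + 1)) → Fin r) : Prop :=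
  ∀ x y : Fin n, c' s(x.castSucc, y.castSucc) = c s(x, y)

/-- An `r`-edge-coloring of `K_n` is `(r, K_k)`-semisaturated if every one-vertex extension
creates a new monochromatic `K_k` (one through the new vertex). -/
def Semisaturated (r k n : ℕ) (c : Sym2 (Fin n) → Fin r) : Prop :=
  ∀ c' : Sym2 (Fin (n + 1)) → Fin r, ColExtends c c' →
    ∃ i : Fin r, ∃ S : Finset (Fin (n + 1)), S.card = k ∧ Fin.last n ∈ S ∧ IsMonoOn c' i S

/-- The semisaturation Ramsey number `ssat_r(K_k)`. -/
noncomputable def ssat (r k : ℕ) : ℕ :=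
  sInf {n | ∃ c : Sym2 (Fin n) → Fin r, Semisaturated r k n c}

open Finset

lemma key_property {n r k : ℕ} (hr : 0 < r) {c : Sym2 (Fin n) → Fin r}
    (hc : Semisaturated r k n c) (f : Fin n → Fin r) :
    ∃ i : Fin r, ∃ S : Finset (Fin n), S.card = k - 1 ∧ (∀ x ∈ S, f x = i) ∧
      (∀ x ∈ S, ∀ y ∈ S, x ≠ y → c s(x, y) = i) := by
  classical
  set h : Fin (n+1) → Fin (n+1) → Fin r := fun x y =>
    if hx : (x : ℕ) < n then
      (if hy : (y : ℕ) < n then c s(⟨x, hx⟩, ⟨y, hy⟩) else f ⟨x, hx⟩)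
    else
      (if hy : (y : ℕ) < n then f ⟨y, hy⟩ else ⟨0, hr⟩) with hh
  have hsymm : ∀ x y, h x y = h y x := by
    intro x y
    simp only [hh]
    split_ifs <;> simp [Sym2.eq_swap]
  set c' : Sym2 (Fin (n+1)) → Fin r := Sym2.lift ⟨h, hsymm⟩ with hc'
  have hext : ColExtends c c' := by
    intro x y
    simp only [hc', Sym2.lift_mk, hh, Fin.coe_castSucc, Fin.is_lt, dif_pos, Fin.eta]
  obtain ⟨i, S, hcard, hlast, hmono⟩ := hc c' hext
  set S' : Finset (Fin n) := univ.filter (fun y => y.castSucc ∈ S) with hS'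
  have himg : S'.image Fin.castSucc = S.erase (Fin.last n) := by
    ext z
    simp only [hS', mem_image, mem_filter, mem_univ, true_and, mem_erase]
    constructor
    · rintro ⟨y, hy, rfl⟩
      exact ⟨(Fin.castSucc_lt_last y).ne, hy⟩
    · rintro ⟨hz, hzS⟩
      exact ⟨z.castPred hz, by rwa [Fin.castSucc_castPred], Fin.castSucc_castPred z hz⟩
  have hcard' : S'.card = k - 1 := by
    have := Finset.card_image_of_injective S' (Fin.castSucc_injective n)
    rw [himg, Finset.card_erase_of_mem hlast, hcard] at this
    omega
  refine ⟨i, S', hcard', ?_, ?_⟩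
  · intro x hx
    have hxS : x.castSucc ∈ S := (mem_filter.mp hx).2
    have := hmono _ hxS _ hlast (Fin.castSucc_lt_last x).ne
    rw [hc', Sym2.lift_mk] at this
    simp only [hh, Fin.coe_castSucc, Fin.is_lt, dif_pos, Fin.val_last, lt_irrefl,
      dif_neg, Fin.eta, not_lt.mpr le_rfl] at this
    exact this
  · intro x hx y hy hxy
    have hxS : x.castSucc ∈ S := (mem_filter.mp hx).2
    have hyS : y.castSucc ∈ S := (mem_filter.mp hy).2
    have := hmono _ hxS _ hyS (by simpa [Fin.castSucc_injective n |>.ne_iff] using hxy)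
    rwa [hext x y] at this

variable {n r : ℕ}

def Indep (c : Sym2 (Fin n) → Fin r) (i : Fin r) (X : Finset (Fin n)) : Prop :=
  ∀ x ∈ X, ∀ y ∈ X, x ≠ y → c s(x, y) ≠ i

lemma exists_max_indep (c : Sym2 (Fin n) → Fin r) (i : Fin r) (U : Finset (Fin n)) :
    ∃ X, X ⊆ U ∧ Indep c i X ∧ ∀ Y, Y ⊆ U → Indep c i Y → Y.card ≤ X.card := by
  classical
  have hne : (U.powerset.filter (fun X => Indep c i X)).Nonempty :=
    ⟨∅, mem_filter.mpr ⟨empty_mem_powerset U, by simp [Indep]⟩⟩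
  obtain ⟨X, hX, hmax⟩ := Finset.exists_max_image _ Finset.card hne
  rw [mem_filter, mem_powerset] at hX
  exact ⟨X, hX.1, hX.2, fun Y hYU hYI =>
    hmax Y (by rw [mem_filter, mem_powerset]; exact ⟨hYU, hYI⟩)⟩

noncomputable def pickMax (c : Sym2 (Fin n) → Fin r) (i : Fin r) (U : Finset (Fin n)) :
    Finset (Fin n) := (exists_max_indep c i U).choose

lemma pickMax_spec (c : Sym2 (Fin n) → Fin r) (i : Fin r) (U : Finset (Fin n)) :
    pickMax c i U ⊆ U ∧ Indep c i (pickMax c i U) ∧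
      ∀ Y, Y ⊆ U → Indep c i Y → Y.card ≤ (pickMax c i U).card :=
  (exists_max_indep c i U).choose_spec

noncomputable def usedSet (c : Sym2 (Fin n) → Fin r) (σ : ℕ → Fin r) : ℕ → Finset (Fin n)
  | 0 => ∅
  | t + 1 => usedSet c σ t ∪ pickMax c (σ t) (univ \ usedSet c σ t)

noncomputable def Xt (c : Sym2 (Fin n) → Fin r) (σ : ℕ → Fin r) (t : ℕ) : Finset (Fin n) :=
  pickMax c (σ t) (univ \ usedSet c σ t)

lemma usedSet_mono (c : Sym2 (Fin n) → Fin r) (σ : ℕ → Fin r) {s t : ℕ} (h : s ≤ t) :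
    usedSet c σ s ⊆ usedSet c σ t := by
  induction t with
  | zero => rw [Nat.le_zero.mp h]
  | succ t ih =>
    rcases Nat.lt_or_ge s (t+1) with h' | h'
    · exact (ih (by omega)).trans (by simp [usedSet, subset_union_left])
    · rw [Nat.le_antisymm h h']

lemma mem_usedSet (c : Sym2 (Fin n) → Fin r) (σ : ℕ → Fin r) {v : Fin n} {t : ℕ} :
    v ∈ usedSet c σ t ↔ ∃ s < t, v ∈ Xt c σ s := by
  induction t with
  | zero => simp [usedSet]
  | succ t ih =>
    simp only [usedSet, mem_union, ih, Xt]
    constructor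
    · rintro (⟨s, hs, hv⟩ | hv)
      · exact ⟨s, by omega, hv⟩
      · exact ⟨t, by omega, hv⟩
    · rintro ⟨s, hs, hv⟩
      rcases Nat.lt_or_ge s t with h' | h'
      · exact Or.inl ⟨s, h', hv⟩
      · have hst : s = t := by omega
        subst hst
        exact Or.inr hv

lemma card_usedSet (c : Sym2 (Fin n) → Fin r) (σ : ℕ → Fin r) (m : ℕ) :
    (usedSet c σ m).card = ∑ t ∈ range m, (Xt c σ t).card := by
  induction m with
  | zero => simp [usedSet]
  | succ m ih =>
    have hsub := (pickMax_spec c (σ m) (univ \ usedSet c σ m)).1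
    have hdisj : Disjoint (usedSet c σ m) (pickMax c (σ m) (univ \ usedSet c σ m)) :=
      Finset.disjoint_left.mpr fun a ha hX => (Finset.mem_sdiff.mp (hsub hX)).2 ha
    rw [Finset.sum_range_succ, ← ih, usedSet, Finset.card_union_of_disjoint hdisj]
    rfl

lemma lower_of_P {n r k : ℕ} (hr : 2 ≤ r) (hk : 3 ≤ k) (c : Sym2 (Fin n) → Fin r)
    (hP : ∀ f : Fin n → Fin r, ∃ i : Fin r, ∃ S : Finset (Fin n), S.card = k - 1 ∧
      (∀ x ∈ S, f x = i) ∧ (∀ x ∈ S, ∀ y ∈ S, x ≠ y → c s(x, y) = i)) :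
    (k - 1) * ((r - 1) * (k - 2) + 1) ≤ n := by
  classical
  set m := (r - 1) * (k - 2) with hm
  set σ : ℕ → Fin r := fun t => ⟨min (t / (k - 2)) (r - 2), by omega⟩ with hσ
  have hσlt : ∀ t, (σ t).val < r - 1 := by
    intro t
    show min (t / (k - 2)) (r - 2) < r - 1
    omega
  set f : Fin n → Fin r := fun v =>
    if h : ∃ t, t < m ∧ v ∈ Xt c σ t then σ h.choose else ⟨r - 1, by omega⟩ with hf
  obtain ⟨i, S, hScard, hSf, hSmono⟩ := hP f
  by_cases hi : i = (⟨r - 1, by omega⟩ : Fin r)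
  · -- good case : S lives in the remainder, every Xt is large
    have hnot : ∀ x ∈ S, ¬∃ t, t < m ∧ x ∈ Xt c σ t := by
      intro x hx hex
      have hfx := hSf x hx
      rw [hf] at hfx
      dsimp only at hfx
      rw [dif_pos hex] at hfx
      have h1 := hσlt hex.choose
      rw [hfx, hi] at h1
      simp at h1
    have hSdisj : ∀ t, t ≤ m → ∀ x ∈ S, x ∉ usedSet c σ t := by
      intro t ht x hx hmem
      obtain ⟨s, hs, hxs⟩ := (mem_usedSet c σ).mp hmem
      exact hnot x hx ⟨s, by omega, hxs⟩
    have hXcard : ∀ t < m, k - 1 ≤ (Xt c σ t).card := by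
      intro t ht
      have hspec := pickMax_spec c (σ t) (univ \ usedSet c σ t)
      have hind : Indep c (σ t) S := by
        intro x hx y hy hxy heq
        have := hSmono x hx y hy hxy
        rw [heq] at this
        have h1 := hσlt t
        rw [this, hi] at h1
        simp at h1
      have := hspec.2.2 S
        (fun x hx => mem_sdiff.mpr ⟨mem_univ x, hSdisj t (le_of_lt ht) x hx⟩) hind
      rw [hScard] at this
      exact this
    have husedcard : m * (k - 1) ≤ (usedSet c σ m).card := by
      rw [card_usedSet]
      calc m * (k - 1) = ∑ _t ∈ range m, (k - 1) := by
            rw [Finset.sum_const, card_range, smul_eq_mul, mul_comm]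
        _ ≤ ∑ t ∈ range m, (Xt c σ t).card :=
            Finset.sum_le_sum (fun t ht => hXcard t (mem_range.mp ht))
    have htotal : (usedSet c σ m).card + S.card ≤ n := by
      have hdisj : Disjoint (usedSet c σ m) S :=
        Finset.disjoint_right.mpr (fun x hx => hSdisj m le_rfl x hx)
      calc (usedSet c σ m).card + S.card = (usedSet c σ m ∪ S).card :=
            (Finset.card_union_of_disjoint hdisj).symm
        _ ≤ (univ : Finset (Fin n)).card := Finset.card_le_card (subset_univ _)
        _ = n := by simp
    calc (k - 1) * ((r - 1) * (k - 2) + 1) = m * (k - 1) + (k - 1) := by rw [hm]; ring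
      _ ≤ (usedSet c σ m).card + S.card := by
          rw [hScard]; exact Nat.add_le_add husedcard le_rfl
      _ ≤ n := htotal
  · -- contradiction case : i is one of the first r-1 colors
    exfalso
    have hsub : S ⊆ ((range m).filter (fun t => σ t = i)).biUnion (fun t => S ∩ Xt c σ t) := by
      intro x hx
      have hfx := hSf x hx
      rw [hf] at hfx
      dsimp only at hfx
      by_cases h : ∃ t, t < m ∧ x ∈ Xt c σ t
      · rw [dif_pos h] at hfx
        obtain ⟨ht, hxt⟩ := h.choose_spec
        exact mem_biUnion.mpr ⟨h.choose, mem_filter.mpr ⟨mem_range.mpr ht, hfx⟩,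
          mem_inter.mpr ⟨hx, hxt⟩⟩
      · rw [dif_neg h] at hfx
        exact absurd hfx.symm hi
    have hone : ∀ t ∈ (range m).filter (fun t => σ t = i), (S ∩ Xt c σ t).card ≤ 1 := by
      intro t ht
      rw [Finset.card_le_one]
      intro a ha b hb
      by_contra hab
      have hIt := (pickMax_spec c (σ t) (univ \ usedSet c σ t)).2.1
      have hcol := hSmono a (mem_inter.mp ha).1 b (mem_inter.mp hb).1 hab
      have := hIt a (mem_inter.mp ha).2 b (mem_inter.mp hb).2 hab
      rw [(mem_filter.mp ht).2] at this
      exact this hcol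
    have hfilter : ((range m).filter (fun t => σ t = i)).card ≤ k - 2 := by
      have hss : (range m).filter (fun t => σ t = i) ⊆
          Finset.Ico (i.val * (k - 2)) (i.val * (k - 2) + (k - 2)) := by
        intro t ht
        obtain ⟨htm, hti⟩ := mem_filter.mp ht
        have htm' := mem_range.mp htm
        have hval : min (t / (k - 2)) (r - 2) = i.val := congrArg Fin.val hti
        have hdiv : t / (k - 2) = i.val := by
          have : t / (k - 2) < r - 1 := by
            apply Nat.div_lt_of_lt_mul
            calc t < m := htm'
              _ = (k - 2) * (r - 1) := by rw [hm]; ring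
          omega
        have h1 := Nat.div_add_mod t (k - 2)
        have h2 : t % (k - 2) < k - 2 := Nat.mod_lt _ (by omega)
        rw [hdiv] at h1
        have hcomm : i.val * (k - 2) = (k - 2) * i.val := Nat.mul_comm _ _
        rw [Finset.mem_Ico]
        omega
      calc ((range m).filter (fun t => σ t = i)).card
          ≤ _ := Finset.card_le_card hss
        _ ≤ k - 2 := by rw [Nat.card_Ico]; omega
    have : S.card ≤ k - 2 := by
      calc S.card ≤ _ := Finset.card_le_card hsub
        _ ≤ ∑ t ∈ (range m).filter (fun t => σ t = i), (S ∩ Xt c σ t).card :=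
            Finset.card_biUnion_le
        _ ≤ ((range m).filter (fun t => σ t = i)).card • 1 :=
            Finset.sum_le_card_nsmul _ _ 1 hone
        _ ≤ k - 2 := by rw [smul_eq_mul, mul_one]; exact hfilter
    omega

lemma upper_bound {r k : ℕ} (hr : 2 ≤ r) (hk : 3 ≤ k) :
    ∃ n, n ≤ 4 * r ^ 2 * k ^ 2 ∧ ∃ c : Sym2 (Fin n) → Fin r, Semisaturated r k n c := by
  classical
  obtain ⟨q, hq, hq1, hq2⟩ := Nat.bertrand (r * k) (by positivity)
  haveI := Fact.mk hq
  set n := q * q with hn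
  have hcard : Fintype.card (ZMod q × ZMod q) = n := by
    simp [ZMod.card, hn]
  set e : Fin n ≃ ZMod q × ZMod q := (Fintype.equivFinOfCardEq hcard).symm with he
  set col : (ZMod q × ZMod q) → (ZMod q × ZMod q) → Fin r := fun x y =>
    ⟨((y.2 - x.2) * (y.1 - x.1)⁻¹).val % r, Nat.mod_lt _ (by omega)⟩ with hcol
  have hslope_symm : ∀ x y : ZMod q × ZMod q,
      (y.2 - x.2) * (y.1 - x.1)⁻¹ = (x.2 - y.2) * (x.1 - y.1)⁻¹ := by
    intro x y
    rw [show x.2 - y.2 = -(y.2 - x.2) from by ring,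
      show x.1 - y.1 = -(y.1 - x.1) from by ring, inv_neg, neg_mul_neg]
  have hcolsym : ∀ a b : Fin n, col (e a) (e b) = col (e b) (e a) := by
    intro a b
    simp only [hcol]
    congr 1
    rw [hslope_symm]
  set c : Sym2 (Fin n) → Fin r := Sym2.lift ⟨fun a b => col (e a) (e b), hcolsym⟩ with hc
  refine ⟨n, ?_, c, ?_⟩
  · have h4 : q * q ≤ (2 * (r * k)) * (2 * (r * k)) := Nat.mul_le_mul hq2 hq2
    calc n = q * q := hn
      _ ≤ (2 * (r * k)) * (2 * (r * k)) := h4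
      _ = 4 * r ^ 2 * k ^ 2 := by ring
  · intro c' hext
    set f : Fin n → Fin r := fun v => c' s(v.castSucc, Fin.last n) with hf
    -- pigeonhole over colors
    have h1 : ∃ i : Fin r, q * k ≤ (univ.filter (fun v => f v = i)).card := by
      by_contra hcon
      push_neg at hcon
      have hsum : (univ : Finset (Fin n)).card =
          ∑ i ∈ (univ : Finset (Fin r)), ((univ : Finset (Fin n)).filter (fun v => f v = i)).card :=
        Finset.card_eq_sum_card_fiberwise (fun x _ => mem_univ _)
      have hsum2 : ∑ i ∈ (univ : Finset (Fin r)),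
          (((univ : Finset (Fin n)).filter (fun v => f v = i)).card + 1) ≤
          ∑ _i ∈ (univ : Finset (Fin r)), q * k :=
        Finset.sum_le_sum (fun i _ => hcon i)
      rw [Finset.sum_add_distrib, Finset.sum_const, Finset.sum_const, card_univ] at hsum2
      simp only [Fintype.card_fin, smul_eq_mul, mul_one] at hsum2
      rw [← hsum] at hsum2
      simp only [card_univ, Fintype.card_fin] at hsum2
      -- hsum2 : q * q + r ≤ r * (q * k), with r * k < q
      have h3 : (r * k + 1) * q ≤ q * q := Nat.mul_le_mul_right q (by omega)
      have hsum3 : q * q + r ≤ r * (q * k) := hsum2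
      nlinarith
    obtain ⟨i, hi⟩ := h1
    set T : Finset (Fin n) := univ.filter (fun v => f v = i) with hT
    set T' : Finset (ZMod q × ZMod q) := T.image e with hT'
    have hT'card : q * k ≤ T'.card := by
      rw [hT', Finset.card_image_of_injective _ e.injective]
      exact hi
    set g : ZMod q × ZMod q → ZMod q := fun p => p.2 - (i.val : ZMod q) * p.1 with hg
    have h2 : ∃ b : ZMod q, k ≤ (T'.filter (fun p => g p = b)).card := by
      by_contra hcon
      push_neg at hcon
      have hsum : T'.card = ∑ b ∈ (univ : Finset (ZMod q)),
          (T'.filter (fun p => g p = b)).card :=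
        Finset.card_eq_sum_card_fiberwise (fun x _ => mem_univ _)
      have hsum2 : ∑ b ∈ (univ : Finset (ZMod q)),
          ((T'.filter (fun p => g p = b)).card + 1) ≤
          ∑ _b ∈ (univ : Finset (ZMod q)), k :=
        Finset.sum_le_sum (fun b _ => hcon b)
      rw [Finset.sum_add_distrib, Finset.sum_const, Finset.sum_const, card_univ, ZMod.card] at hsum2
      simp only [smul_eq_mul, mul_one] at hsum2
      rw [← hsum] at hsum2
      omega
    obtain ⟨b, hb⟩ := h2
    obtain ⟨L', hL'sub, hL'card⟩ :=
      Finset.exists_subset_card_eq (show k - 1 ≤ (T'.filter (fun p => g p = b)).card by omega)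
    have hline : ∀ p ∈ L', g p = b := fun p hp => (mem_filter.mp (hL'sub hp)).2
    have hmemT : ∀ p ∈ L', f (e.symm p) = i := by
      intro p hp
      have : p ∈ T' := (mem_filter.mp (hL'sub hp)).1
      obtain ⟨v, hv, rfl⟩ := mem_image.mp this
      rw [Equiv.symm_apply_apply]
      exact (mem_filter.mp hv).2
    -- all pairs in L' get color i
    have hpair : ∀ p ∈ L', ∀ p' ∈ L', p ≠ p' → col p p' = i := by
      intro p hp p' hp' hne
      have h1' : p.2 - (i.val : ZMod q) * p.1 = b := hline p hp
      have h2' : p'.2 - (i.val : ZMod q) * p'.1 = b := hline p' hp'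
      have hx1 : p'.1 - p.1 ≠ 0 := by
        intro h0
        apply hne
        have h11 : p.1 = p'.1 := by linear_combination -h0
        have h22 : p.2 = p'.2 := by linear_combination h1' - h2' - (i.val : ZMod q) * h0
        exact Prod.ext h11 h22
      have hslope : (p'.2 - p.2) * (p'.1 - p.1)⁻¹ = (i.val : ZMod q) := by
        have hnum : p'.2 - p.2 = (i.val : ZMod q) * (p'.1 - p.1) := by
          linear_combination h2' - h1'
        rw [hnum, mul_assoc, mul_inv_cancel₀ hx1, mul_one]
      have hval : ((i.val : ZMod q)).val = i.val :=
        ZMod.val_cast_of_lt (by have := i.isLt; nlinarith)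
      simp only [hcol]
      apply Fin.ext
      simp only [hslope, hval]
      exact Nat.mod_eq_of_lt i.isLt
    set D : Finset (Fin (n + 1)) := L'.image (fun p => (e.symm p).castSucc) with hD
    have hinj : Function.Injective (fun p : ZMod q × ZMod q => (e.symm p).castSucc) :=
      (Fin.castSucc_injective n).comp e.symm.injective
    have hDcard : D.card = k - 1 := by
      rw [hD, Finset.card_image_of_injective _ hinj, hL'card]
    have hlastD : Fin.last n ∉ D := by
      rw [hD]
      intro hmem
      obtain ⟨p, _, hp⟩ := mem_image.mp hmem
      exact (Fin.castSucc_lt_last _).ne hp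
    refine ⟨i, insert (Fin.last n) D, ?_, mem_insert_self _ _, ?_⟩
    · rw [Finset.card_insert_of_notMem hlastD, hDcard]; omega
    · intro x hx y hy hxy
      rcases mem_insert.mp hx with rfl | hxD
      · rcases mem_insert.mp hy with rfl | hyD
        · exact absurd rfl hxy
        · obtain ⟨p, hp, rfl⟩ := mem_image.mp hyD
          rw [Sym2.eq_swap]
          have : c' s((e.symm p).castSucc, Fin.last n) = f (e.symm p) := rfl
          rw [this, hmemT p hp]
      · obtain ⟨p, hp, rfl⟩ := mem_image.mp hxD
        rcases mem_insert.mp hy with rfl | hyD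
        · have : c' s((e.symm p).castSucc, Fin.last n) = f (e.symm p) := rfl
          rw [this, hmemT p hp]
        · obtain ⟨p', hp', rfl⟩ := mem_image.mp hyD
          have hpne : p ≠ p' := fun h => hxy (by rw [h])
          rw [hext (e.symm p) (e.symm p')]
          have : c s(e.symm p, e.symm p') = col (e (e.symm p)) (e (e.symm p')) := rfl
          rw [this, Equiv.apply_symm_apply, Equiv.apply_symm_apply]
          exact hpair p hp p' hp' hpne

theorem stmt11 (r : ℕ) (hr : 2 ≤ r) :
    (∃ C : ℝ, 0 < C ∧ ∀ k : ℕ, 3 ≤ k → (ssat r k : ℝ) ≤ C * (k : ℝ) ^ 2) ∧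
    (∀ k : ℕ, 3 ≤ k →
      ((r : ℝ) - 1) * (k : ℝ) ^ 2 - (3 * (r : ℝ) - 4) * k + (2 * (r : ℝ) - 3) ≤
        (ssat r k : ℝ)) := by
  constructor
  · refine ⟨4 * (r : ℝ) ^ 2, by positivity, ?_⟩
    intro k hk
    obtain ⟨n, hn, c, hc⟩ := upper_bound hr hk
    have hle : ssat r k ≤ n := Nat.sInf_le ⟨c, hc⟩
    have : (ssat r k : ℝ) ≤ ((4 * r ^ 2 * k ^ 2 : ℕ) : ℝ) := by
      exact_mod_cast hle.trans hn
    calc (ssat r k : ℝ) ≤ ((4 * r ^ 2 * k ^ 2 : ℕ) : ℝ) := this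
      _ = 4 * (r : ℝ) ^ 2 * (k : ℝ) ^ 2 := by push_cast; ring
  · intro k hk
    have hne : {n | ∃ c : Sym2 (Fin n) → Fin r, Semisaturated r k n c}.Nonempty := by
      obtain ⟨n, _, c, hc⟩ := upper_bound hr hk
      exact ⟨n, c, hc⟩
    obtain ⟨c, hc⟩ := Nat.sInf_mem hne
    have hP := fun f => key_property (by omega : 0 < r) hc f
    have hlow : (k - 1) * ((r - 1) * (k - 2) + 1) ≤ ssat r k := lower_of_P hr hk c hP
    have hcast : (((k - 1) * ((r - 1) * (k - 2) + 1) : ℕ) : ℝ) =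
        ((k : ℝ) - 1) * (((r : ℝ) - 1) * ((k : ℝ) - 2) + 1) := by
      push_cast [Nat.cast_sub (by omega : 1 ≤ k), Nat.cast_sub (by omega : 2 ≤ k),
        Nat.cast_sub (by omega : 1 ≤ r)]
      ring
    have hlowR : ((k : ℝ) - 1) * (((r : ℝ) - 1) * ((k : ℝ) - 2) + 1) ≤ (ssat r k : ℝ) := by
      rw [← hcast]
      exact_mod_cast hlow
    nlinarith [hlowR]
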